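/- arXiv:1403.5954 — 8 statements merged into one kernel-verified Lean document; each statement's English description precedes it below -/
import Mathlib

section
/- The set of ∘-vectors of the quotient group K̄ = K/K_{σ,ε}, i.e., those t̄ ∈ K̄ such that t̄∘(λ+μ) = t̄∘λ + t̄∘μ for all λ,μ ∈ K, equals K^{σ,ε}/K_{σ,ε}. -/
/-- `K_{σ,ε} = {t - t^σ·ε : t ∈ K}`. -/
def Kse {K : Type*} [DivisionRing K] (σ : K → K) (ε : K) : Set K :=
  {x : K | ∃ t : K, x = t - σ t * ε}

/-- `K^{σ,ε} = {t ∈ K : t = -t^σ·ε}`. -/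
def Kup {K : Type*} [DivisionRing K] (σ : K → K) (ε : K) : Set K :=
  {t : K | t = -(σ t * ε)}

/-- The set of ∘-vectors of `K̄ = K/K_{σ,ε}` (those `t̄` with
`t̄∘(λ+μ) = t̄∘λ + t̄∘μ` for all `λ,μ`, where `t̄∘λ = λ^σ·t·λ + K_{σ,ε}`)
equals `K^{σ,ε}/K_{σ,ε}`. -/
theorem stmt4 {K : Type*} [DivisionRing K] (σ : K → K) (ε : K)
    (hadd : ∀ a b : K, σ (a + b) = σ a + σ b)
    (hmul : ∀ a b : K, σ (a * b) = σ b * σ a)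
    (hbij : Function.Bijective σ)
    (hε : σ ε * ε = 1)
    (hσ2 : ∀ t : K, σ (σ t) = ε * t * ε⁻¹)
    (N : AddSubgroup K) (hN : (N : Set K) = Kse σ ε) :
    ∀ t : K,
      ((∀ lam mu : K,
          (QuotientAddGroup.mk (σ (lam + mu) * t * (lam + mu)) : K ⧸ N)
            = QuotientAddGroup.mk (σ lam * t * lam)
              + QuotientAddGroup.mk (σ mu * t * mu))
        ↔ (QuotientAddGroup.mk t : K ⧸ N)
            ∈ (fun x : K => (QuotientAddGroup.mk x : K ⧸ N)) '' Kup σ ε) := by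
  -- basic facts about σ and ε
  have hσ0 : σ 0 = 0 := by
    have h := hadd 0 0
    rw [add_zero] at h
    have h2 : σ 0 + σ 0 = σ 0 + 0 := by rw [add_zero]; exact h.symm
    exact add_left_cancel h2
  have hσ1 : σ 1 = 1 := by
    have h := hmul 1 1
    rw [mul_one] at h
    have h1 : σ 1 ≠ 0 := fun h0 => one_ne_zero (hbij.1 (h0.trans hσ0.symm))
    have h2 : σ 1 * σ 1 = σ 1 * 1 := by rw [mul_one]; exact h.symm
    exact mul_left_cancel₀ h1 h2
  have hεne : ε ≠ 0 := fun h0 => zero_ne_one (by rw [h0, mul_zero] at hε; exact hε)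
  have hinv : ε⁻¹ * ε = 1 := inv_mul_cancel₀ hεne
  have hneg : ∀ a : K, σ (-a) = -σ a := by
    intro a
    have h := hadd a (-a)
    rw [add_neg_cancel, hσ0] at h
    exact eq_neg_of_add_eq_zero_right h.symm
  have hsub : ∀ a b : K, σ (a - b) = σ a - σ b := by
    intro a b
    rw [sub_eq_add_neg, hadd, hneg, sub_eq_add_neg]
  -- membership in N
  have memN : ∀ x : K, x ∈ N ↔ ∃ s : K, x = s - σ s * ε := by
    intro x
    rw [← SetLike.mem_coe, hN]
    rfl
  -- N ⊆ Kup
  have NsubKup : ∀ x : K, x ∈ N → x = -(σ x * ε) := by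
    intro x hx
    obtain ⟨s, rfl⟩ := (memN x).mp hx
    rw [hsub, hmul, hσ2]
    have e1 : (σ s - σ ε * (ε * s * ε⁻¹)) * ε
        = σ s * ε - σ ε * ε * s * (ε⁻¹ * ε) := by noncomm_ring
    rw [e1, hε, hinv, one_mul, mul_one]
    noncomm_ring
  -- the key reformulation of the distributivity condition
  have key : ∀ t lam mu : K,
      ((QuotientAddGroup.mk (σ (lam + mu) * t * (lam + mu)) : K ⧸ N)
          = QuotientAddGroup.mk (σ lam * t * lam)
            + QuotientAddGroup.mk (σ mu * t * mu))
        ↔ σ lam * t * mu + σ mu * t * lam ∈ N := by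
    intro t lam mu
    rw [← QuotientAddGroup.mk_add, QuotientAddGroup.eq_iff_sub_mem]
    have e : σ (lam + mu) * t * (lam + mu) - (σ lam * t * lam + σ mu * t * mu)
        = σ lam * t * mu + σ mu * t * lam := by
      rw [hadd]; noncomm_ring
    rw [e]
  intro t
  constructor
  · -- forward direction
    intro H
    have hμ : ∀ mu : K, t * mu + σ mu * t ∈ N := by
      intro mu
      have h := (key t 1 mu).mp (H 1 mu)
      rwa [hσ1, one_mul, mul_one] at h
    set u : K := t + σ t * ε with hu_def
    -- from N ⊆ Kup : u * mu + σ mu * u = 0 for all mu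
    have hu : ∀ mu : K, u * mu + σ mu * u = 0 := by
      intro mu
      have h1 := NsubKup _ (hμ mu)
      rw [hadd, hmul, hmul, hσ2] at h1
      -- h1 : t*mu + σ mu * t = -((σ mu * σ t + σ t * (ε * mu * ε⁻¹)) * ε)
      have e1 : (σ mu * σ t + σ t * (ε * mu * ε⁻¹)) * ε
          = σ mu * (σ t * ε) + σ t * ε * mu * (ε⁻¹ * ε) := by noncomm_ring
      rw [e1, hinv, mul_one] at h1
      have : u * mu + σ mu * u
          = (t * mu + σ mu * t) + (σ mu * (σ t * ε) + σ t * ε * mu) := by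
        rw [hu_def]; noncomm_ring
      rw [this, h1]
      noncomm_ring
    -- u = 0
    have hu0 : u = 0 := by
      by_contra hne
      have h2u : u + u = 0 := by
        have h := hu 1
        rwa [mul_one, hσ1, one_mul] at h
      have char2 : (1 : K) + 1 = 0 := by
        have h : (1 + 1) * u = 0 := by rw [add_mul, one_mul]; exact h2u
        rcases mul_eq_zero.mp h with h | h
        · exact h
        · exact absurd h hne
      have negid : ∀ a : K, -a = a := by
        intro a
        have : a + a = 0 := by
          have : a + a = (1 + 1) * a := by rw [add_mul, one_mul]
          rw [this, char2, zero_mul]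
        exact neg_eq_of_add_eq_zero_left this
      have hσu : ∀ mu : K, σ mu * u = u * mu := by
        intro mu
        have h := hu mu
        have := eq_neg_of_add_eq_zero_right h
        rw [negid] at this
        exact this
      have hcomm : ∀ a b : K, a * b = b * a := by
        intro a b
        have h1 : u * (a * b) = u * (b * a) := by
          calc u * (a * b) = σ (a * b) * u := (hσu _).symm
            _ = σ b * (σ a * u) := by rw [hmul, mul_assoc]
            _ = σ b * (u * a) := by rw [hσu]
            _ = (σ b * u) * a := by rw [mul_assoc]
            _ = u * b * a := by rw [hσu]
            _ = u * (b * a) := by rw [mul_assoc]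
        exact mul_left_cancel₀ hne h1
      have hσid : ∀ a : K, σ a = a := by
        intro a
        have h1 : σ a * u = a * u := by rw [hσu, hcomm]
        exact mul_right_cancel₀ hne h1
      have hεε : ε * ε = 1 := by
        calc ε * ε = σ ε * ε := by rw [hσid]
          _ = 1 := hε
      have hε1 : ε = 1 := by
        have h : (ε - 1) * (ε - 1) = 0 := by
          have e : (ε - 1) * (ε - 1) = ε * ε - (ε + ε) + 1 := by noncomm_ring
          have hεε0 : ε + ε = 0 := by
            have : ε + ε = (1 + 1) * ε := by rw [add_mul, one_mul]
            rw [this, char2, zero_mul]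
          rw [e, hεε, hεε0, sub_zero]
          exact char2
        exact sub_eq_zero.mp (mul_self_eq_zero.mp h)
      have : u = 0 := by
        rw [hu_def, hσid, hε1, mul_one]
        have : t + t = (1 + 1) * t := by rw [add_mul, one_mul]
        rw [this, char2, zero_mul]
      exact hne this
    -- conclude t ∈ Kup
    refine ⟨t, ?_, rfl⟩
    show t = -(σ t * ε)
    exact eq_neg_of_add_eq_zero_left hu0
  · -- backward direction
    rintro ⟨x, hx, hxt⟩
    have hxN : x - t ∈ N := QuotientAddGroup.eq_iff_sub_mem.mp hxt
    have hxKup : x = -(σ x * ε) := hx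
    -- t ∈ Kup
    have htKup : t = -(σ t * ε) := by
      have hd := NsubKup _ hxN
      have ht : t = x - (x - t) := by noncomm_ring
      have hσt : σ t * ε = -t := by
        have : σ t * ε = σ (x - (x - t)) * ε := by rw [← ht]
        rw [this, hsub, sub_mul]
        rw [← neg_eq_iff_eq_neg.mpr hxKup, ← neg_eq_iff_eq_neg.mpr hd]
        rw [ht]; noncomm_ring
      rw [hσt, neg_neg]
    intro lam mu
    apply (key t lam mu).mpr
    rw [memN]
    refine ⟨σ lam * t * mu, ?_⟩
    have hσtε : σ t * ε = -t := neg_eq_iff_eq_neg.mp htKup.symm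
    rw [hmul, hmul, hσ2]
    have e1 : σ mu * (σ t * (ε * lam * ε⁻¹)) * ε
        = σ mu * (σ t * ε) * lam * (ε⁻¹ * ε) := by noncomm_ring
    rw [e1, hinv, mul_one, hσtε]
    noncomm_ring
end

section
/- The pair (σ,ε) is of trace type (i.e., K_{σ,-ε} = K^{σ,-ε}) if and only if K^{σ,ε}/K_{σ,ε} is trivial, i.e., K^{σ,ε} = K_{σ,ε}. -/
/-- `(σ,ε)` is of trace type (i.e. `K_{σ,-ε} = K^{σ,-ε}`) iff
`K^{σ,ε} = K_{σ,ε}` (i.e. `K^{σ,ε}/K_{σ,ε}` is trivial). -/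
theorem stmt6 {K : Type*} [DivisionRing K] (σ : K → K) (ε : K)
    (hadd : ∀ a b : K, σ (a + b) = σ a + σ b)
    (hmul : ∀ a b : K, σ (a * b) = σ b * σ a)
    (hbij : Function.Bijective σ)
    (hε : σ ε * ε = 1)
    (hσ2 : ∀ t : K, σ (σ t) = ε * t * ε⁻¹) :
    Kse σ (-ε) = Kup σ (-ε) ↔ Kup σ ε = Kse σ ε := by
  -- basic facts about σ
  have h0 : σ 0 = 0 := by
    have h := hadd 0 0
    simp only [add_zero] at h
    exact left_eq_add.mp h
  have hneg : ∀ a : K, σ (-a) = -σ a := by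
    intro a
    have h := hadd a (-a)
    simp only [add_neg_cancel, h0] at h
    exact (neg_eq_of_add_eq_zero_right h.symm).symm
  have hsub : ∀ a b : K, σ (a - b) = σ a - σ b := by
    intro a b
    rw [sub_eq_add_neg, hadd, hneg, sub_eq_add_neg]
  have hε0 : ε ≠ 0 := by
    intro h
    rw [h, mul_zero] at hε
    exact one_ne_zero hε.symm
  have hσε : σ ε = ε⁻¹ := by
    rw [← mul_inv_cancel_right₀ hε0 (σ ε), hε, one_mul]
  -- Kse ⊆ Kup, for any admissible δ
  have subset1 : ∀ δ : K, δ ≠ 0 → σ δ = δ⁻¹ →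
      (∀ t : K, σ (σ t) = δ * t * δ⁻¹) → Kse σ δ ⊆ Kup σ δ := by
    intro δ hδ0 hσδ hδ2 x hx
    obtain ⟨t, rfl⟩ := hx
    show t - σ t * δ = -(σ (t - σ t * δ) * δ)
    have e1 : σ (t - σ t * δ) = σ t - t * δ⁻¹ := by
      rw [hsub, hmul, hσδ, hδ2, ← mul_assoc, ← mul_assoc, inv_mul_cancel₀ hδ0, one_mul]
    rw [e1, sub_mul, inv_mul_cancel_right₀ hδ0, neg_sub]
  -- case split on characteristic 2
  by_cases h2 : (2 : K) = 0
  · -- char 2: -ε = ε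
    have hee : -ε = ε := by
      have h : ε + ε = 0 := by rw [← two_mul, h2, zero_mul]
      exact neg_eq_of_add_eq_zero_left h
    rw [hee]
    exact eq_comm
  · -- char ≠ 2 : both equalities hold
    have h1 : σ 1 = 1 := by
      have h := hmul 1 1
      rw [mul_one] at h
      have hne : σ 1 ≠ 0 := by
        intro hc
        have := hbij.injective (hc.trans h0.symm)
        exact one_ne_zero this
      have : σ 1 * 1 = σ 1 * σ 1 := by rw [mul_one, ← h]
      exact (mul_left_cancel₀ hne this).symm
    have hσ2' : σ 2 = 2 := by
      have : σ ((1 : K) + 1) = σ 1 + σ 1 := hadd 1 1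
      rw [h1] at this
      rw [show ((2:K) = 1 + 1) from one_add_one_eq_two.symm, this, one_add_one_eq_two]
    have hσhalf : σ ((2:K)⁻¹) = (2:K)⁻¹ := by
      have h : σ ((2:K)⁻¹ * 2) = σ 2 * σ (2:K)⁻¹ := hmul _ _
      rw [inv_mul_cancel₀ h2, h1, hσ2'] at h
      have : (2:K) * (2:K)⁻¹ = (2:K) * σ (2:K)⁻¹ := by
        rw [mul_inv_cancel₀ h2, h]
      exact (mul_left_cancel₀ h2 this).symm
    have hcomm : ∀ a : K, (2:K)⁻¹ * a = a * (2:K)⁻¹ := by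
      intro a
      have h2a : (2:K) * a = a * 2 := by rw [two_mul, mul_two]
      calc (2:K)⁻¹ * a = 2⁻¹ * (2 * a * 2⁻¹) := by
            rw [h2a, mul_inv_cancel_right₀ h2]
        _ = a * 2⁻¹ := by
            rw [← mul_assoc, ← mul_assoc, inv_mul_cancel₀ h2, one_mul]
    -- Kup ⊆ Kse for any δ, in char ≠ 2
    have subset2 : ∀ δ : K, Kup σ δ ⊆ Kse σ δ := by
      intro δ x hx
      have hx' : x = -(σ x * δ) := hx
      refine ⟨(2:K)⁻¹ * x, ?_⟩
      have e1 : σ ((2:K)⁻¹ * x) = (2:K)⁻¹ * σ x := by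
        rw [hmul, hσhalf, hcomm]
      rw [e1, mul_assoc, ← mul_sub, sub_eq_add_neg, ← hx', ← two_mul,
        inv_mul_cancel_left₀ h2]
    -- facts for δ = -ε
    have hnε0 : -ε ≠ 0 := neg_ne_zero.mpr hε0
    have hσnε : σ (-ε) = (-ε)⁻¹ := by rw [hneg, hσε, inv_neg]
    have hσ2nε : ∀ t : K, σ (σ t) = (-ε) * t * (-ε)⁻¹ := by
      intro t
      rw [hσ2 t]
      simp [inv_neg]
    constructor
    · intro _
      exact le_antisymm (subset2 ε) (subset1 ε hε0 hσε hσ2)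
    · intro _
      exact le_antisymm (subset1 (-ε) hnε0 hσnε hσ2nε) (subset2 (-ε))
end

section
/- If K_{σ,ε} ≠ K, then a (σ,ε)-quadratic form q on V admits a unique sesquilinearization: if f and f' are trace-valued (σ,ε)-sesquilinear forms on V with q(x+y) - q(x) - q(y) = f(x,y) + K_{σ,ε} = f'(x,y) + K_{σ,ε} for all x,y ∈ V, then f = f'. -/
/-- If `K_{σ,ε} ≠ K`, a `(σ,ε)`-quadratic form `q : V → K/K_{σ,ε}` admits a
unique sesquilinearization: if `f` and `g` are trace-valued
`(σ,ε)`-sesquilinear forms with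
`q(x+y) = q(x) + q(y) + (f(x,y) + K_{σ,ε}) = q(x) + q(y) + (g(x,y) + K_{σ,ε})`,
then `f = g`. -/
theorem stmt10 {K : Type*} [DivisionRing K] (σ : K → K) (ε : K)
    (hadd : ∀ a b : K, σ (a + b) = σ a + σ b)
    (hmul : ∀ a b : K, σ (a * b) = σ b * σ a)
    (hbij : Function.Bijective σ)
    (hε : σ ε * ε = 1)
    (hσ2 : ∀ t : K, σ (σ t) = ε * t * ε⁻¹)
    (hproper : Kse σ ε ≠ Set.univ)
    (N : AddSubgroup K) (hN : (N : Set K) = Kse σ ε)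
    {V : Type*} [AddCommGroup V] [Module K V]
    (q : V → K ⧸ N) (f g : V → V → K)
    (hfa : ∀ x xx y : V, f (x + xx) y = f x y + f xx y)
    (hfb : ∀ x y yy : V, f x (y + yy) = f x y + f x yy)
    (hfs : ∀ (lam mu : K) (x y : V), f (lam • x) (mu • y) = σ lam * f x y * mu)
    (hfr : ∀ x y : V, f y x = σ (f x y) * ε)
    (hft : ∀ x : V, ∃ t : K, f x x = t + σ t * ε)
    (hga : ∀ x xx y : V, g (x + xx) y = g x y + g xx y)
    (hgb : ∀ x y yy : V, g x (y + yy) = g x y + g x yy)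
    (hgs : ∀ (lam mu : K) (x y : V), g (lam • x) (mu • y) = σ lam * g x y * mu)
    (hgr : ∀ x y : V, g y x = σ (g x y) * ε)
    (hgt : ∀ x : V, ∃ t : K, g x x = t + σ t * ε)
    (hq : ∀ (lam : K) (x : V) (t : K), q x = QuotientAddGroup.mk t →
      q (lam • x) = QuotientAddGroup.mk (σ lam * t * lam))
    (hqf : ∀ x y : V, q (x + y) = q x + q y + QuotientAddGroup.mk (f x y))
    (hqg : ∀ x y : V, q (x + y) = q x + q y + QuotientAddGroup.mk (g x y)) :
    f = g := by
  have hσ0 : σ 0 = 0 := by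
    have h := hadd 0 0
    simpa using h
  have hσ1 : σ 1 = 1 := by
    have h := (hmul 1 1).symm
    rw [one_mul] at h
    have h1 : σ 1 * (σ 1 - 1) = 0 := by rw [mul_sub, mul_one, h, sub_self]
    rcases mul_eq_zero.mp h1 with h2 | h2
    · exfalso
      have : (1 : K) = 0 := hbij.injective (by rw [h2, hσ0])
      exact one_ne_zero this
    · rwa [sub_eq_zero] at h2
  have hmem : ∀ u v : V, f u v - g u v ∈ N := by
    intro u v
    have h1 := (hqf u v).symm.trans (hqg u v)
    have h2 : (QuotientAddGroup.mk (f u v) : K ⧸ N) = QuotientAddGroup.mk (g u v) :=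
      add_left_cancel h1
    have h3 : -(f u v) + g u v ∈ N := (QuotientAddGroup.eq).mp h2
    have h4 := neg_mem h3
    simpa [neg_add_rev, sub_eq_add_neg, add_comm] using h4
  funext x y
  by_contra hne
  have hc : f x y - g x y ≠ 0 := sub_ne_zero.mpr hne
  have hmu : ∀ μ : K, (f x y - g x y) * μ ∈ Kse σ ε := by
    intro μ
    have hf1 : f x (μ • y) = f x y * μ := by
      have := hfs 1 μ x y
      rwa [one_smul, hσ1, one_mul] at this
    have hg1 : g x (μ • y) = g x y * μ := by
      have := hgs 1 μ x y
      rwa [one_smul, hσ1, one_mul] at this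
    have := hmem x (μ • y)
    rw [hf1, hg1, ← sub_mul] at this
    rwa [← hN]
  apply hproper
  ext z
  simp only [Set.mem_univ, iff_true]
  have := hmu ((f x y - g x y)⁻¹ * z)
  rwa [← mul_assoc, mul_inv_cancel₀ hc, one_mul] at this
end

section
/- Let q : V → K̄/R̄ be a generalized (σ,ε)-quadratic form with co-defect R̄ ≠ K̄ and sesquilinearization f. Then the preimage R of R̄ in K is contained in K^{σ,ε} := {t ∈ K : t = -t^σ·ε}; equivalently, R̄ ⊆ K^{σ,ε}/K_{σ,ε}. -/
/-- For a generalized `(σ,ε)`-quadratic form `q : V → K̄/R̄` with co-defect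
`R̄ ≠ K̄` and sesquilinearization `f`, the preimage `R` of `R̄` in `K` is
contained in `K^{σ,ε}`. -/
theorem stmt11 {K : Type*} [DivisionRing K] (σ : K → K) (ε : K)
    (hadd : ∀ a b : K, σ (a + b) = σ a + σ b)
    (hmul : ∀ a b : K, σ (a * b) = σ b * σ a)
    (hbij : Function.Bijective σ)
    (hε : σ ε * ε = 1)
    (hσ2 : ∀ t : K, σ (σ t) = ε * t * ε⁻¹)
    (R : AddSubgroup K)
    (hRK : Kse σ ε ⊆ (R : Set K))
    (hRclosed : ∀ r ∈ R, ∀ lam : K, σ lam * r * lam ∈ R)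
    (hRproper : (R : Set K) ≠ Set.univ)
    {V : Type*} [AddCommGroup V] [Module K V]
    (q : V → K ⧸ R) (f : V → V → K)
    (hfa : ∀ x xx y : V, f (x + xx) y = f x y + f xx y)
    (hfb : ∀ x y yy : V, f x (y + yy) = f x y + f x yy)
    (hfs : ∀ (lam mu : K) (x y : V), f (lam • x) (mu • y) = σ lam * f x y * mu)
    (hfr : ∀ x y : V, f y x = σ (f x y) * ε)
    (hft : ∀ x : V, ∃ t : K, f x x = t + σ t * ε)
    (hq : ∀ (lam : K) (x : V) (t : K), q x = QuotientAddGroup.mk t →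
      q (lam • x) = QuotientAddGroup.mk (σ lam * t * lam))
    (hqf : ∀ x y : V, q (x + y) = q x + q y + QuotientAddGroup.mk (f x y)) :
    (R : Set K) ⊆ Kup σ ε := by
  -- basic facts about σ and ε
  have hσ0 : σ 0 = 0 := by
    have := hadd 0 0; simpa using this.symm
  have hσ1 : σ 1 = 1 := by
    have h1 : σ 1 = σ 1 * σ 1 := by simpa using hmul 1 1
    have hne : σ 1 ≠ 0 := by
      intro h
      have : (1 : K) = 0 := hbij.1 (by rw [h, hσ0])
      exact one_ne_zero this
    have : σ 1 * 1 = σ 1 * σ 1 := by simpa using h1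
    exact (mul_left_cancel₀ hne this).symm
  have hεne : ε ≠ 0 := by
    intro h; rw [h, mul_zero] at hε; exact one_ne_zero hε.symm
  intro r hr
  -- Step 1: for all μ, r*μ + σ μ * r ∈ R
  have step1 : ∀ μ : K, r * μ + σ μ * r ∈ R := by
    intro μ
    have h1 : σ (1 + μ) * r * (1 + μ) ∈ R := hRclosed r hr (1 + μ)
    have hexp : σ (1 + μ) * r * (1 + μ)
        = r + (r * μ + σ μ * r) + σ μ * r * μ := by
      rw [hadd, hσ1]; noncomm_ring
    rw [hexp] at h1
    have h2 : σ μ * r * μ ∈ R := hRclosed r hr μ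
    have := R.sub_mem (R.sub_mem h1 h2) hr
    simpa using this
  -- Step 2: for all μ, σ μ * r - σ r * ε * μ ∈ R
  have step2 : ∀ μ : K, σ μ * r - σ r * ε * μ ∈ R := by
    intro μ
    have h1 : σ μ * r - σ (σ μ * r) * ε ∈ R := hRK ⟨σ μ * r, rfl⟩
    have h2 : σ (σ μ * r) * ε = σ r * ε * μ := by
      rw [hmul, hσ2]
      rw [mul_assoc, mul_assoc, inv_mul_cancel₀ hεne, mul_one, ← mul_assoc]
    rwa [h2] at h1
  -- Step 3: (r + σ r * ε) * μ ∈ R for all μ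
  have step3 : ∀ μ : K, (r + σ r * ε) * μ ∈ R := by
    intro μ
    have := R.sub_mem (step1 μ) (step2 μ)
    have heq : r * μ + σ μ * r - (σ μ * r - σ r * ε * μ)
        = (r + σ r * ε) * μ := by noncomm_ring
    rwa [heq] at this
  -- Conclude: if r + σ r * ε ≠ 0 then R = K, contradiction
  by_contra hcon
  have hs : r + σ r * ε ≠ 0 := by
    intro h
    exact hcon (by simpa [Kup, eq_neg_iff_add_eq_zero] using h)
  apply hRproper
  ext c
  simp only [Set.mem_univ, iff_true, SetLike.mem_coe]
  have := step3 ((r + σ r * ε)⁻¹ * c)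
  rwa [← mul_assoc, mul_inv_cancel₀ hs, one_mul] at this
end

section
/- Let q : V → K̄/R̄ be a generalized (σ,ε)-quadratic form with R̄ ≠ K̄ and sesquilinearization f. For every x ∈ V, if q(x) = 0 then f(x,x) = 0. -/
/-- For a generalized `(σ,ε)`-quadratic form `q` with co-defect `R̄ ≠ K̄` and
sesquilinearization `f`: if `q(x) = 0` then `f(x,x) = 0`. -/
theorem stmt12 {K : Type*} [DivisionRing K] (σ : K → K) (ε : K)
    (hadd : ∀ a b : K, σ (a + b) = σ a + σ b)
    (hmul : ∀ a b : K, σ (a * b) = σ b * σ a)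
    (hbij : Function.Bijective σ)
    (hε : σ ε * ε = 1)
    (hσ2 : ∀ t : K, σ (σ t) = ε * t * ε⁻¹)
    (R : AddSubgroup K)
    (hRK : Kse σ ε ⊆ (R : Set K))
    (hRclosed : ∀ r ∈ R, ∀ lam : K, σ lam * r * lam ∈ R)
    (hRproper : (R : Set K) ≠ Set.univ)
    {V : Type*} [AddCommGroup V] [Module K V]
    (q : V → K ⧸ R) (f : V → V → K)
    (hfa : ∀ x xx y : V, f (x + xx) y = f x y + f xx y)
    (hfb : ∀ x y yy : V, f x (y + yy) = f x y + f x yy)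
    (hfs : ∀ (lam mu : K) (x y : V), f (lam • x) (mu • y) = σ lam * f x y * mu)
    (hfr : ∀ x y : V, f y x = σ (f x y) * ε)
    (hft : ∀ x : V, ∃ t : K, f x x = t + σ t * ε)
    (hq : ∀ (lam : K) (x : V) (t : K), q x = QuotientAddGroup.mk t →
      q (lam • x) = QuotientAddGroup.mk (σ lam * t * lam))
    (hqf : ∀ x y : V, q (x + y) = q x + q y + QuotientAddGroup.mk (f x y)) :
    ∀ x : V, q x = 0 → f x x = 0 := by
  intro x hx
  by_contra hc
  apply hRproper
  have hσ0 : σ 0 = 0 := by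
    have h := hadd 0 0
    rw [add_zero] at h
    exact (left_eq_add.mp h)
  have hσ1 : σ 1 = 1 := by
    have h := hmul 1 1
    rw [one_mul] at h
    have h0 : σ 1 ≠ 0 := fun h1 => one_ne_zero (hbij.1 (h1.trans hσ0.symm))
    have : σ 1 * σ 1 = σ 1 * 1 := by rw [mul_one]; exact h.symm
    exact mul_left_cancel₀ h0 this
  have hq0 : q x = QuotientAddGroup.mk 0 := by
    rw [hx]; rfl
  have key : ∀ lam : K, f x x * lam ∈ R := by
    intro lam
    have h1 : q (lam • x) = 0 := by
      have := hq lam x 0 hq0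
      rw [mul_zero, zero_mul] at this
      rw [this]; rfl
    have h2 : q ((1 + lam) • x) = 0 := by
      have := hq (1 + lam) x 0 hq0
      rw [mul_zero, zero_mul] at this
      rw [this]; rfl
    have h3 := hqf x (lam • x)
    have hsm : x + lam • x = (1 + lam) • x := by rw [add_smul, one_smul]
    rw [hsm, h2, hx, h1] at h3
    have hfx : f x (lam • x) = f x x * lam := by
      have h := hfs 1 lam x x
      rw [hσ1, one_mul, one_smul] at h
      exact h
    rw [hfx, zero_add, zero_add] at h3
    exact (QuotientAddGroup.eq_zero_iff _).mp h3.symm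
  apply Set.eq_univ_of_forall
  intro w
  have h := key ((f x x)⁻¹ * w)
  rwa [← mul_assoc, mul_inv_cancel₀ hc, one_mul] at h
end

section
/- Let q : V → K̄/R̄ be a non-trivial generalized pseudo-quadratic form with sesquilinearization f, U ⊆ Rad(f) a K-subspace with U ∩ {u : q(u)=0} = {0}, and let R̄_U be the subgroup of K̄ containing R̄ with R̄_U/R̄ = q(U). Then the map q_U : V/U → K̄/R̄_U sending x+U to (any representative of q(x)) + R̄_U is well-defined, i.e., if x - x' ∈ U then q(x) and q(x') have the same image in K̄/R̄_U. -/
/-- Well-definedness of the quotient form `q_U : V/U → K̄/R̄_U`: for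
`U ⊆ Rad(f)` with `U ∩ {u : q(u) = 0} = 0` and `R̄_U/R̄ = q(U)`, if
`x - x' ∈ U` then `q(x)` and `q(x')` have the same image modulo `R_U`. -/
theorem stmt17 {K : Type*} [DivisionRing K] (σ : K → K) (ε : K)
    (hadd : ∀ a b : K, σ (a + b) = σ a + σ b)
    (hmul : ∀ a b : K, σ (a * b) = σ b * σ a)
    (hbij : Function.Bijective σ)
    (hε : σ ε * ε = 1)
    (hσ2 : ∀ t : K, σ (σ t) = ε * t * ε⁻¹)
    (R : AddSubgroup K)
    (hRK : Kse σ ε ⊆ (R : Set K))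
    (hRclosed : ∀ r ∈ R, ∀ lam : K, σ lam * r * lam ∈ R)
    (hRproper : (R : Set K) ≠ Set.univ)
    {V : Type*} [AddCommGroup V] [Module K V]
    (q : V → K ⧸ R) (f : V → V → K)
    (hfa : ∀ x xx y : V, f (x + xx) y = f x y + f xx y)
    (hfb : ∀ x y yy : V, f x (y + yy) = f x y + f x yy)
    (hfs : ∀ (lam mu : K) (x y : V), f (lam • x) (mu • y) = σ lam * f x y * mu)
    (hfr : ∀ x y : V, f y x = σ (f x y) * ε)
    (hft : ∀ x : V, ∃ t : K, f x x = t + σ t * ε)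
    (hq : ∀ (lam : K) (x : V) (t : K), q x = QuotientAddGroup.mk t →
      q (lam • x) = QuotientAddGroup.mk (σ lam * t * lam))
    (hqf : ∀ x y : V, q (x + y) = q x + q y + QuotientAddGroup.mk (f x y))
    (hqnt : ∃ v : V, q v ≠ 0)
    (U : Submodule K V)
    (hUrad : ∀ u ∈ U, ∀ y : V, f u y = 0)
    (hUint : ∀ u ∈ U, q u = 0 → u = 0)
    (RU : AddSubgroup K) (hRRU : R ≤ RU)
    (hRU : ∀ t : K, t ∈ RU ↔
      (QuotientAddGroup.mk t : K ⧸ R) ∈ q '' (U : Set V)) :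
    ∀ x xx : V, x - xx ∈ U →
      ∀ t tt : K, q x = QuotientAddGroup.mk t → q xx = QuotientAddGroup.mk tt →
        t - tt ∈ RU := by
  intro x xx hU t tt hx hxx
  have key : q x = q xx + q (x - xx) := by
    have := hqf xx (x - xx)
    rw [add_sub_cancel] at this
    rw [this, hfr, hUrad _ hU]
    have : σ (0 : K) = 0 := by
      have h := hadd 0 0
      simpa using h
    simp [this]
  have hqu : q (x - xx) = QuotientAddGroup.mk (t - tt) := by
    have : q (x - xx) = q x - q xx := by
      rw [key]; abel
    rw [this, hx, hxx]
    rfl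
  rw [hRU]
  exact ⟨x - xx, hU, hqu⟩
end

section
/- Let f be a nonzero trace-valued (σ,ε)-sesquilinear form on V such that for every x ∈ V, f(x,x) = 0 (i.e., every point is isotropic). Then σ = id, ε = -1, and f is an alternating bilinear form; in particular K is commutative. -/
/-- A nonzero trace-valued `(σ,ε)`-sesquilinear form with `f(x,x) = 0` for all
`x` forces `σ = id` and `ε = -1`; in particular `f` is an alternating bilinear
form and `K` is commutative. -/
theorem stmt18 {K : Type*} [DivisionRing K] (σ : K → K) (ε : K)
    (hadd : ∀ a b : K, σ (a + b) = σ a + σ b)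
    (hmul : ∀ a b : K, σ (a * b) = σ b * σ a)
    (hbij : Function.Bijective σ)
    (hε : σ ε * ε = 1)
    (hσ2 : ∀ t : K, σ (σ t) = ε * t * ε⁻¹)
    {V : Type*} [AddCommGroup V] [Module K V]
    (f : V → V → K)
    (hfa : ∀ x xx y : V, f (x + xx) y = f x y + f xx y)
    (hfb : ∀ x y yy : V, f x (y + yy) = f x y + f x yy)
    (hfs : ∀ (lam mu : K) (x y : V), f (lam • x) (mu • y) = σ lam * f x y * mu)
    (hfr : ∀ x y : V, f y x = σ (f x y) * ε)
    (hft : ∀ x : V, ∃ t : K, f x x = t + σ t * ε)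
    (hfnz : ∃ x y : V, f x y ≠ 0)
    (halt : ∀ x : V, f x x = 0) :
    (∀ t : K, σ t = t) ∧ ε = -1 ∧ (∀ a b : K, a * b = b * a) := by
  -- skew-symmetry
  have hskew : ∀ x y : V, f y x = - f x y := by
    intro x y
    have h := halt (x + y)
    rw [hfa, hfb, hfb, halt, halt] at h
    have h' : f x y + f y x = 0 := by
      rw [← h]; abel
    exact eq_neg_of_add_eq_zero_right h' 
  -- every element of K is a value of f
  have hval : ∀ a : K, σ a * ε = -a := by
    obtain ⟨x, y, hc⟩ := hfnz
    intro a
    obtain ⟨lam, hlam⟩ := hbij.2 (a * (f x y)⁻¹)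
    have h1 : f (lam • x) y = a := by
      have := hfs lam 1 x y
      rw [one_smul] at this
      rw [this, hlam, mul_one, inv_mul_cancel_right₀ hc]
    have h2 := hfr (lam • x) y
    rw [h1, hskew, h1] at h2
    exact h2.symm
  -- σ 0 = 0
  have h0 : σ 0 = 0 := by
    have := hadd 0 0
    simpa using this
  -- σ 1 = 1
  have h1 : σ 1 = 1 := by
    have hne : σ 1 ≠ 0 := by
      intro h
      have := hbij.1 (h.trans h0.symm)
      exact one_ne_zero this
    have := hmul 1 1
    rw [mul_one] at this
    have : σ 1 * σ 1 = 1 * σ 1 := by rw [one_mul, ← this]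
    exact mul_right_cancel₀ hne this
  have hε1 : ε = -1 := by
    have := hval 1
    rw [h1, one_mul] at this
    exact this
  have hid : ∀ t : K, σ t = t := by
    intro t
    have := hval t
    rw [hε1] at this
    rw [mul_neg_one] at this
    exact neg_injective this
  refine ⟨hid, hε1, fun a b => ?_⟩
  have := hmul a b
  rw [hid, hid, hid] at this
  exact this
end

section
/- Let E = (e_i)_{i∈I} be a basis of V indexed by a linearly ordered set I, with f(e_i,e_i) = 0 for all i, and define g_E(Σ e_i λ_i, Σ e_j μ_j) := Σ_{i<j} λ_i^σ f(e_i,e_j) μ_j. Then g_E is a σ-sesquilinear form and f(x,y) = g_E(x,y) + g_E(y,x)^σ ε for all x,y ∈ V. -/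
/-- Given a basis `E = (e_i)` over a linearly ordered index set with
`f(e_i,e_i) = 0`, the form
`g_E(Σ e_i λ_i, Σ e_j μ_j) = Σ_{i<j} λ_i^σ f(e_i,e_j) μ_j`
is σ-sesquilinear and `f(x,y) = g_E(x,y) + g_E(y,x)^σ ε` for all `x, y`. -/
theorem stmt19 {K : Type*} [DivisionRing K] (σ : K → K) (ε : K)
    (hadd : ∀ a b : K, σ (a + b) = σ a + σ b)
    (hmul : ∀ a b : K, σ (a * b) = σ b * σ a)
    (hbij : Function.Bijective σ)
    (hε : σ ε * ε = 1)
    (hσ2 : ∀ t : K, σ (σ t) = ε * t * ε⁻¹)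
    {V : Type*} [AddCommGroup V] [Module K V]
    (f : V → V → K)
    (hfa : ∀ x xx y : V, f (x + xx) y = f x y + f xx y)
    (hfb : ∀ x y yy : V, f x (y + yy) = f x y + f x yy)
    (hfs : ∀ (lam mu : K) (x y : V), f (lam • x) (mu • y) = σ lam * f x y * mu)
    (hfr : ∀ x y : V, f y x = σ (f x y) * ε)
    (hft : ∀ x : V, ∃ t : K, f x x = t + σ t * ε)
    {ι : Type*} [LinearOrder ι] (E : Module.Basis ι K V)
    (hE : ∀ i : ι, f (E i) (E i) = 0)
    (g : V → V → K)
    (hg : ∀ x y : V, g x y =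
      ∑ i ∈ (E.repr x).support, ∑ j ∈ (E.repr y).support,
        if i < j then σ (E.repr x i) * f (E i) (E j) * E.repr y j else 0) :
    (∀ x xx y : V, g (x + xx) y = g x y + g xx y) ∧
    (∀ x y yy : V, g x (y + yy) = g x y + g x yy) ∧
    (∀ (lam mu : K) (x y : V), g (lam • x) (mu • y) = σ lam * g x y * mu) ∧
    (∀ x y : V, f x y = g x y + σ (g y x) * ε) := by
  classical
  have σ0 : σ 0 = 0 := by
    have h := hadd 0 0
    rw [add_zero] at h
    exact (left_eq_add.mp h)
  have f0l : ∀ y : V, f 0 y = 0 := by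
    intro y
    have h := hfa 0 0 y
    rw [add_zero] at h
    exact (left_eq_add.mp h)
  have f0r : ∀ x : V, f x 0 = 0 := by
    intro x
    have h := hfb x 0 0
    rw [add_zero] at h
    exact (left_eq_add.mp h)
  have σsum : ∀ (T : Finset ι) (u : ι → K), σ (∑ i ∈ T, u i) = ∑ i ∈ T, σ (u i) := by
    intro T u
    induction T using Finset.cons_induction with
    | empty => simpa using σ0
    | cons a s ha ih => rw [Finset.sum_cons, Finset.sum_cons, hadd, ih]
  have fsumL : ∀ (y : V) (T : Finset ι) (u : ι → V),
      f (∑ i ∈ T, u i) y = ∑ i ∈ T, f (u i) y := by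
    intro y T u
    induction T using Finset.cons_induction with
    | empty => simpa using f0l y
    | cons a s ha ih => rw [Finset.sum_cons, Finset.sum_cons, hfa, ih]
  have fsumR : ∀ (x : V) (T : Finset ι) (u : ι → V),
      f x (∑ i ∈ T, u i) = ∑ i ∈ T, f x (u i) := by
    intro x T u
    induction T using Finset.cons_induction with
    | empty => simpa using f0r x
    | cons a s ha ih => rw [Finset.sum_cons, Finset.sum_cons, hfb, ih]
  have hx : ∀ (v : V) (S : Finset ι), (E.repr v).support ⊆ S →
      v = ∑ i ∈ S, (E.repr v i) • E i := by
    intro v S hS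
    conv_lhs => rw [← E.linearCombination_repr v]
    rw [Finsupp.linearCombination_apply,
      Finsupp.sum_of_support_subset _ hS _ (fun i _ => zero_smul K (E i))]
  have hg' : ∀ (x y : V) (S T : Finset ι),
      (E.repr x).support ⊆ S → (E.repr y).support ⊆ T →
      g x y = ∑ i ∈ S, ∑ j ∈ T,
        if i < j then f ((E.repr x i) • E i) ((E.repr y j) • E j) else 0 := by
    intro x y S T hS hT
    have hzx : ∀ i ∈ S, i ∉ (E.repr x).support →
        (∑ j ∈ (E.repr y).support,
          if i < j then σ (E.repr x i) * f (E i) (E j) * E.repr y j else 0) = 0 := by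
      intro i _ hi
      simp [Finsupp.notMem_support_iff.mp hi, σ0]
    rw [hg x y, Finset.sum_subset hS hzx]
    refine Finset.sum_congr rfl fun i _ => ?_
    have hzy : ∀ j ∈ T, j ∉ (E.repr y).support →
        (if i < j then σ (E.repr x i) * f (E i) (E j) * E.repr y j else 0) = 0 := by
      intro j _ hj
      simp [Finsupp.notMem_support_iff.mp hj]
    rw [Finset.sum_subset hT hzy]
    exact Finset.sum_congr rfl fun j _ => by rw [hfs]
  refine ⟨?_, ?_, ?_, ?_⟩
  · -- additive in first argument
    intro x xx y
    set S := (E.repr x).support ∪ (E.repr xx).support ∪ (E.repr (x + xx)).support with hSdef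
    have h1 : (E.repr (x + xx)).support ⊆ S := Finset.subset_union_right
    have h2 : (E.repr x).support ⊆ S :=
      Finset.subset_union_left.trans Finset.subset_union_left
    have h3 : (E.repr xx).support ⊆ S :=
      Finset.subset_union_right.trans Finset.subset_union_left
    rw [hg' (x + xx) y S _ h1 subset_rfl, hg' x y S _ h2 subset_rfl,
      hg' xx y S _ h3 subset_rfl, ← Finset.sum_add_distrib]
    refine Finset.sum_congr rfl fun i _ => ?_
    rw [← Finset.sum_add_distrib]
    refine Finset.sum_congr rfl fun j _ => ?_
    by_cases hij : i < j
    · rw [if_pos hij, if_pos hij, if_pos hij]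
      have hr : E.repr (x + xx) i = E.repr x i + E.repr xx i := by simp
      rw [hr, add_smul, hfa]
    · simp [hij]
  · -- additive in second argument
    intro x y yy
    set S := (E.repr y).support ∪ (E.repr yy).support ∪ (E.repr (y + yy)).support with hSdef
    have h1 : (E.repr (y + yy)).support ⊆ S := Finset.subset_union_right
    have h2 : (E.repr y).support ⊆ S :=
      Finset.subset_union_left.trans Finset.subset_union_left
    have h3 : (E.repr yy).support ⊆ S :=
      Finset.subset_union_right.trans Finset.subset_union_left
    rw [hg' x (y + yy) _ S subset_rfl h1, hg' x y _ S subset_rfl h2,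
      hg' x yy _ S subset_rfl h3, ← Finset.sum_add_distrib]
    refine Finset.sum_congr rfl fun i _ => ?_
    rw [← Finset.sum_add_distrib]
    refine Finset.sum_congr rfl fun j _ => ?_
    by_cases hij : i < j
    · rw [if_pos hij, if_pos hij, if_pos hij]
      have hr : E.repr (y + yy) j = E.repr y j + E.repr yy j := by simp
      rw [hr, add_smul, hfb]
    · simp [hij]
  · -- sesquilinear scaling
    intro lam mu x y
    set S := (E.repr x).support ∪ (E.repr (lam • x)).support with hSdef
    set T := (E.repr y).support ∪ (E.repr (mu • y)).support with hTdef
    rw [hg' (lam • x) (mu • y) S T Finset.subset_union_right Finset.subset_union_right,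
      hg' x y S T Finset.subset_union_left Finset.subset_union_left]
    simp only [Finset.mul_sum, Finset.sum_mul]
    refine Finset.sum_congr rfl fun i _ => Finset.sum_congr rfl fun j _ => ?_
    by_cases hij : i < j
    · rw [if_pos hij, if_pos hij]
      have h1 : E.repr (lam • x) i = lam * E.repr x i := by simp
      have h2 : E.repr (mu • y) j = mu * E.repr y j := by simp
      rw [h1, h2, mul_smul, mul_smul, hfs lam mu]
    · simp [hij]
  · -- f x y = g x y + σ (g y x) * ε
    intro x y
    set S := (E.repr x).support ∪ (E.repr y).support with hSdef
    have hSx : (E.repr x).support ⊆ S := Finset.subset_union_left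
    have hSy : (E.repr y).support ⊆ S := Finset.subset_union_right
    have hfxy : f x y = ∑ i ∈ S, ∑ j ∈ S,
        f ((E.repr x i) • E i) ((E.repr y j) • E j) := by
      conv_lhs => rw [hx x S hSx, hx y S hSy]
      rw [fsumL]
      exact Finset.sum_congr rfl fun i _ => fsumR _ _ _
    have keyA : σ (g y x) * ε = ∑ i ∈ S, ∑ j ∈ S,
        if i < j then f ((E.repr x j) • E j) ((E.repr y i) • E i) else 0 := by
      rw [hg' y x S S hSy hSx, σsum, Finset.sum_mul]
      refine Finset.sum_congr rfl fun i _ => ?_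
      rw [σsum, Finset.sum_mul]
      refine Finset.sum_congr rfl fun j _ => ?_
      by_cases h : i < j
      · rw [if_pos h, if_pos h]
        exact (hfr _ _).symm
      · rw [if_neg h, if_neg h, σ0, zero_mul]
    have key : σ (g y x) * ε = ∑ i ∈ S, ∑ j ∈ S,
        if j < i then f ((E.repr x i) • E i) ((E.repr y j) • E j) else 0 := by
      rw [keyA]
      exact Finset.sum_comm
    rw [hfxy, hg' x y S S hSx hSy, key, ← Finset.sum_add_distrib]
    refine Finset.sum_congr rfl fun i _ => ?_
    rw [← Finset.sum_add_distrib]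
    refine Finset.sum_congr rfl fun j _ => ?_
    rcases lt_trichotomy i j with h | h | h
    · rw [if_pos h, if_neg (lt_asymm h), add_zero]
    · subst h
      rw [if_neg (lt_irrefl i), add_zero, hfs, hE, mul_zero, zero_mul]
    · rw [if_neg (lt_asymm h), if_pos h, zero_add]
end
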